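/- For all b > 0 and all x ∈ [0,1] one has the inequality φ(x,b) ≤ 1/3, where φ(x,b) := ((b+x)/(4(2b+1)²))·( 4(b+1)⁴·log(b+1) − 4b⁴·log b − (2b+1)·( 3 + 6b + 6b² − 4(b+x)² ) ) − ((2b²+2b+1)/(2b+1))·(b+x)·log(b+x). -/

import Mathlib

open MeasureTheory Set

set_option maxHeartbeats 2000000

/-- The function `φ(x,b) = (b+x)·Φ(b, b+x)`, where `Φ` is the sharp constant in the
weighted Poincaré inequality on `[b, b+1]`. -/
noncomputable def phi (x b : ℝ) : ℝ :=
  ((b + x) / (4 * (2 * b + 1) ^ 2)) *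
    (4 * (b + 1) ^ 4 * Real.log (b + 1) - 4 * b ^ 4 * Real.log b
      - (2 * b + 1) * (3 + 6 * b + 6 * b ^ 2 - 4 * (b + x) ^ 2))
  - ((2 * b ^ 2 + 2 * b + 1) / (2 * b + 1)) * (b + x) * Real.log (b + x)


lemma pade {t : ℝ} (ht : 0 ≤ t) :
    Real.log (1 + t) ≤ t*(30+21*t+t^2)/(3*(10+12*t+3*t^2)) := by
  set f : ℝ → ℝ := fun s => s*(30+21*s+s^2)/(3*(10+12*s+3*s^2)) - Real.log (1+s) with hf
  have hder : ∀ s ∈ Set.Ici (0:ℝ),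
      HasDerivAt f (9*s^5/((1+s)*(3*(10+12*s+3*s^2))^2)) s := by
    intro s hs
    have hs0 : (0:ℝ) ≤ s := hs
    have h1 : (0:ℝ) < 1 + s := by linarith
    have hDpos : (0:ℝ) < 3*(10+12*s+3*s^2) := by nlinarith [sq_nonneg s]
    have hN : HasDerivAt (fun s : ℝ => s*(30+21*s+s^2)) (1*(30+21*s+s^2) + s*(21+2*s)) s := by
      have hinner : HasDerivAt (fun s : ℝ => 30+21*s+s^2) (21+2*s) s := by
        have h := (((hasDerivAt_id s).const_mul (21:ℝ)).const_add (30:ℝ)).add (hasDerivAt_pow 2 s)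
        exact h.congr_deriv (by norm_num)
      exact (hasDerivAt_id s).mul hinner
    have hD : HasDerivAt (fun s : ℝ => 3*(10+12*s+3*s^2)) (3*(12+6*s)) s := by
      have hinner : HasDerivAt (fun s : ℝ => 10+12*s+3*s^2) (12+6*s) s := by
        have h := (((hasDerivAt_id s).const_mul (12:ℝ)).const_add (10:ℝ)).add ((hasDerivAt_pow 2 s).const_mul 3)
        exact h.congr_deriv (by norm_num; ring)
      exact hinner.const_mul 3
    have hq := hN.div hD (ne_of_gt hDpos)
    have hl : HasDerivAt (fun s : ℝ => Real.log (1+s)) (1/(1+s)) s := by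
      have h := (Real.hasDerivAt_log (ne_of_gt h1)).comp s ((hasDerivAt_id s).const_add 1)
      exact h.congr_deriv (by simp)
    have htot := hq.sub hl
    refine htot.congr_deriv ?_
    rw [div_sub_div _ _ (by positivity) (ne_of_gt h1)]
    rw [div_eq_div_iff (by positivity) (by positivity)]
    ring
  have hmono : MonotoneOn f (Set.Ici (0:ℝ)) := by
    apply monotoneOn_of_deriv_nonneg (convex_Ici 0)
    · exact fun s hs => (hder s hs).continuousAt.continuousWithinAt
    · intro s hs
      rw [interior_Ici] at hs
      exact ((hder s (Set.mem_Ici.2 (le_of_lt hs))).differentiableAt).differentiableWithinAt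
    · intro s hs
      rw [interior_Ici] at hs
      rw [(hder s (Set.mem_Ici.2 (le_of_lt hs))).deriv]
      have h1 : (0:ℝ) < 1 + s := by linarith [le_of_lt (Set.mem_Ioi.1 hs)]
      have hDpos : (0:ℝ) < 3*(10+12*s+3*s^2) := by nlinarith [sq_nonneg s]
      apply div_nonneg
      · exact mul_nonneg (by norm_num) (pow_nonneg (le_of_lt (Set.mem_Ioi.1 hs)) 5)
      · exact (mul_pos h1 (pow_pos hDpos 2)).le
  have h0 : f 0 = 0 := by simp [hf]
  have hft := hmono Set.self_mem_Ici (Set.mem_Ici.2 ht) ht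
  rw [h0] at hft
  simp only [hf] at hft
  linarith

lemma log_one_add_inv_le {y : ℝ} (hy : 0 < y) :
    Real.log (1 + 1/y) ≤ (30*y^2+21*y+1)/(3*y*(10*y^2+12*y+3)) := by
  have h := pade (t := 1/y) (by positivity)
  have he : (1/y)*(30+21*(1/y)+(1/y)^2)/(3*(10+12*(1/y)+3*(1/y)^2))
      = (30*y^2+21*y+1)/(3*y*(10*y^2+12*y+3)) := by
    rw [div_eq_div_iff (by positivity) (by positivity)]
    field_simp
  linarith [h, he.le, he.ge]


lemma log_three_le : Real.log 3 ≤ 76/69 := by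
  have h := pade (t := (2:ℝ)) (by norm_num)
  norm_num at h
  exact h

/-- `4(2b+1)²` times the derivative of `φ` with respect to `x`, at `c = b+x`. -/
noncomputable def dphiE (c b : ℝ) : ℝ :=
  4*(b+1)^4*Real.log (b+1) - 4*b^4*Real.log b - (2*b+1)*(3+6*b+6*b^2)
    + 12*(2*b+1)*c^2 - 4*(2*b+1)*(2*b^2+2*b+1)*(Real.log c + 1)

lemma log_sub_log_b (b : ℝ) (hb : 0 < b) :
    Real.log (b+1) - Real.log b ≤ (30*b^2+21*b+1)/(3*b*(10*b^2+12*b+3)) := by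
  have h := log_one_add_inv_le hb
  have he : Real.log (1 + 1/b) = Real.log (b+1) - Real.log b := by
    rw [show (1:ℝ) + 1/b = (b+1)/b by field_simp, Real.log_div (by positivity) (ne_of_gt hb)]
  linarith [he ▸ h]

lemma N1 (b : ℝ) (hb : 1/3 ≤ b) : dphiE b b < 0 := by
  have hb0 : (0:ℝ) < b := by linarith
  have e : dphiE b b = 4*(b+1)^4*(Real.log (b+1) - Real.log b) - (2*b+1)*(2*b^2+14*b+7) := by
    unfold dphiE; ring
  have l := log_sub_log_b b hb0
  have step : dphiE b b ≤ 4*(b+1)^4*((30*b^2+21*b+1)/(3*b*(10*b^2+12*b+3))) - (2*b+1)*(2*b^2+14*b+7) := by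
    rw [e]
    have := mul_le_mul_of_nonneg_left l (by positivity : (0:ℝ) ≤ 4*(b+1)^4)
    linarith
  have hden : (0:ℝ) < 3*b*(10*b^2+12*b+3) := by nlinarith [sq_nonneg b]
  have key : 4*(b+1)^4*((30*b^2+21*b+1)/(3*b*(10*b^2+12*b+3))) - (2*b+1)*(2*b^2+14*b+7) < 0 := by
    rw [mul_div_assoc'] at *
    rw [sub_neg, div_lt_iff₀ hden]
    nlinarith [mul_nonneg (sub_nonneg.2 hb) (sub_nonneg.2 hb), pow_nonneg (sub_nonneg.2 hb) 3,
      pow_nonneg (sub_nonneg.2 hb) 4, pow_nonneg (sub_nonneg.2 hb) 5,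
      mul_nonneg (pow_nonneg (sub_nonneg.2 hb) 2) (sub_nonneg.2 hb)]
  linarith



lemma N2 (b : ℝ) (hb : 0 < b) : dphiE (b+1/2) b < 0 := by
  have e : dphiE (b+1/2) b
      = 4*(b+1)^4*(Real.log (b+1) - Real.log (b+1/2))
        + 4*b^4*(Real.log (b+1/2) - Real.log b) - 2*(2*b+1)*(b^2+b+2) := by
    unfold dphiE; ring
  have l1 : Real.log (b+1) - Real.log (b+1/2)
      ≤ (30*(2*b+1)^2+21*(2*b+1)+1)/(3*(2*b+1)*(10*(2*b+1)^2+12*(2*b+1)+3)) := by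
    have h := log_one_add_inv_le (y := 2*b+1) (by linarith)
    have he : Real.log (1 + 1/(2*b+1)) = Real.log (b+1) - Real.log (b+1/2) := by
      rw [show (1:ℝ) + 1/(2*b+1) = (b+1)/(b+1/2) by field_simp; ring,
        Real.log_div (by positivity) (by positivity)]
    linarith [he ▸ h]
  have l2 : Real.log (b+1/2) - Real.log b
      ≤ (30*(2*b)^2+21*(2*b)+1)/(3*(2*b)*(10*(2*b)^2+12*(2*b)+3)) := by
    have h := log_one_add_inv_le (y := 2*b) (by linarith)
    have he : Real.log (1 + 1/(2*b)) = Real.log (b+1/2) - Real.log b := by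
      rw [show (1:ℝ) + 1/(2*b) = (b+1/2)/b by field_simp,
        Real.log_div (by positivity) (ne_of_gt hb)]
    linarith [he ▸ h]
  have step : dphiE (b+1/2) b
      ≤ 4*(b+1)^4*((30*(2*b+1)^2+21*(2*b+1)+1)/(3*(2*b+1)*(10*(2*b+1)^2+12*(2*b+1)+3)))
        + 4*b^4*((30*(2*b)^2+21*(2*b)+1)/(3*(2*b)*(10*(2*b)^2+12*(2*b)+3)))
        - 2*(2*b+1)*(b^2+b+2) := by
    rw [e]
    have h1 := mul_le_mul_of_nonneg_left l1 (by positivity : (0:ℝ) ≤ 4*(b+1)^4)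
    have h2 := mul_le_mul_of_nonneg_left l2 (by positivity : (0:ℝ) ≤ 4*b^4)
    linarith
  have hd1 : (0:ℝ) < 3*(2*b+1)*(10*(2*b+1)^2+12*(2*b+1)+3) := by nlinarith [sq_nonneg b]
  have hd2 : (0:ℝ) < 3*(2*b)*(10*(2*b)^2+12*(2*b)+3) := by nlinarith [sq_nonneg b]
  have key : 4*(b+1)^4*((30*(2*b+1)^2+21*(2*b+1)+1)/(3*(2*b+1)*(10*(2*b+1)^2+12*(2*b+1)+3)))
        + 4*b^4*((30*(2*b)^2+21*(2*b)+1)/(3*(2*b)*(10*(2*b)^2+12*(2*b)+3)))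
        - 2*(2*b+1)*(b^2+b+2)
      = (4*(b+1)^4*(30*(2*b+1)^2+21*(2*b+1)+1)*(3*(2*b)*(10*(2*b)^2+12*(2*b)+3))
          + 4*b^4*(30*(2*b)^2+21*(2*b)+1)*(3*(2*b+1)*(10*(2*b+1)^2+12*(2*b+1)+3))
          - 2*(2*b+1)*(b^2+b+2)*((3*(2*b+1)*(10*(2*b+1)^2+12*(2*b+1)+3))*(3*(2*b)*(10*(2*b)^2+12*(2*b)+3))))
        / ((3*(2*b+1)*(10*(2*b+1)^2+12*(2*b+1)+3))*(3*(2*b)*(10*(2*b)^2+12*(2*b)+3))) := by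
    field_simp
  have hnum : 4*(b+1)^4*(30*(2*b+1)^2+21*(2*b+1)+1)*(3*(2*b)*(10*(2*b)^2+12*(2*b)+3))
          + 4*b^4*(30*(2*b)^2+21*(2*b)+1)*(3*(2*b+1)*(10*(2*b+1)^2+12*(2*b+1)+3))
          - 2*(2*b+1)*(b^2+b+2)*((3*(2*b+1)*(10*(2*b+1)^2+12*(2*b+1)+3))*(3*(2*b)*(10*(2*b)^2+12*(2*b)+3))) < 0 := by
    nlinarith [hb, pow_pos hb 2, pow_pos hb 3, pow_pos hb 4, pow_pos hb 5, pow_pos hb 6,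
      pow_pos hb 7, pow_pos hb 8, pow_pos hb 9]
  calc dphiE (b+1/2) b ≤ _ := step
    _ < 0 := by rw [key]; exact div_neg_of_neg_of_pos hnum (by positivity)



lemma N3 (b : ℝ) (hb : 0 < b) (hb3 : b ≤ 1/3) : dphiE (1/3) b < 0 := by
  -- log (b+1) ≤ Rb
  have lL : Real.log (b+1) ≤ b*(30+21*b+b^2)/(3*(10+12*b+3*b^2)) := by
    have h := pade (t := b) hb.le
    rw [add_comm] at h
    exact h
  -- -log b = log 3 + log (1/(3b)) ; log(1/(3b)) = log(1+t), t=(1-3b)/(3b)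
  have lt0 : (0:ℝ) ≤ (1-3*b)/(3*b) := by
    apply div_nonneg (by linarith) (by linarith)
  have llog3b : -Real.log b ≤ 76/69 + (1-3*b)*(90*b^2+57*b+1)/(27*b*(3*b^2+6*b+1)) := by
    have h := pade lt0
    have he : (1:ℝ) + (1-3*b)/(3*b) = 1/(3*b) := by field_simp; ring
    rw [he] at h
    have he2 : Real.log (1/(3*b)) = -(Real.log 3 + Real.log b) := by
      rw [one_div, Real.log_inv, Real.log_mul (by norm_num) (ne_of_gt hb)]
    rw [he2] at h
    have he3 : ((1-3*b)/(3*b))*(30+21*((1-3*b)/(3*b))+((1-3*b)/(3*b))^2)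
          /(3*(10+12*((1-3*b)/(3*b))+3*((1-3*b)/(3*b))^2))
        = (1-3*b)*(90*b^2+57*b+1)/(27*b*(3*b^2+6*b+1)) := by
      rw [div_eq_div_iff]
      · field_simp
        ring
      · have : (0:ℝ) < 10+12*((1-3*b)/(3*b))+3*((1-3*b)/(3*b))^2 := by
          have h1 : (0:ℝ) ≤ ((1-3*b)/(3*b))^2 := sq_nonneg _
          nlinarith [lt0]
        positivity
      · positivity
    rw [he3] at h
    linarith [log_three_le]
  -- assemble
  have e : dphiE (1/3) b
      = 4*(b+1)^4*Real.log (b+1) + 4*b^4*(-Real.log b)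
        + 4*(2*b+1)*(2*b^2+2*b+1)*(-Real.log (1/3))
        - (2*b+1)*(3+6*b+6*b^2) + 12*(2*b+1)*(1/9) - 4*(2*b+1)*(2*b^2+2*b+1) := by
    unfold dphiE; ring
  have hlog13 : -Real.log (1/3) = Real.log 3 := by
    rw [one_div, Real.log_inv]; ring
  have step : dphiE (1/3) b
      ≤ 4*(b+1)^4*(b*(30+21*b+b^2)/(3*(10+12*b+3*b^2)))
        + 4*b^4*(76/69 + (1-3*b)*(90*b^2+57*b+1)/(27*b*(3*b^2+6*b+1)))
        + 4*(2*b+1)*(2*b^2+2*b+1)*(76/69)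
        - (2*b+1)*(3+6*b+6*b^2) + 12*(2*b+1)*(1/9) - 4*(2*b+1)*(2*b^2+2*b+1) := by
    rw [e, hlog13]
    have h1 := mul_le_mul_of_nonneg_left lL (by positivity : (0:ℝ) ≤ 4*(b+1)^4)
    have h2 := mul_le_mul_of_nonneg_left llog3b (by positivity : (0:ℝ) ≤ 4*b^4)
    have h3 := mul_le_mul_of_nonneg_left log_three_le
      (by positivity : (0:ℝ) ≤ 4*(2*b+1)*(2*b^2+2*b+1))
    linarith
  have hd1 : (0:ℝ) < 3*(10+12*b+3*b^2) := by nlinarith [sq_nonneg b]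
  have hd2 : (0:ℝ) < 27*b*(3*b^2+6*b+1) := by nlinarith [sq_nonneg b]
  have key : 4*(b+1)^4*(b*(30+21*b+b^2)/(3*(10+12*b+3*b^2)))
        + 4*b^4*(76/69 + (1-3*b)*(90*b^2+57*b+1)/(27*b*(3*b^2+6*b+1)))
        + 4*(2*b+1)*(2*b^2+2*b+1)*(76/69)
        - (2*b+1)*(3+6*b+6*b^2) + 12*(2*b+1)*(1/9) - 4*(2*b+1)*(2*b^2+2*b+1)
      = (4*(b+1)^4*(b*(30+21*b+b^2))*(27*b*(3*b^2+6*b+1))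
          + 4*b^4*((1-3*b)*(90*b^2+57*b+1))*(3*(10+12*b+3*b^2))
          + (4*b^4*(76/69) + 4*(2*b+1)*(2*b^2+2*b+1)*(76/69)
              - (2*b+1)*(3+6*b+6*b^2) + 12*(2*b+1)*(1/9) - 4*(2*b+1)*(2*b^2+2*b+1))
            *((3*(10+12*b+3*b^2))*(27*b*(3*b^2+6*b+1))))
        /((3*(10+12*b+3*b^2))*(27*b*(3*b^2+6*b+1))) := by
    field_simp
    ring
  have hnum : 4*(b+1)^4*(b*(30+21*b+b^2))*(27*b*(3*b^2+6*b+1))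
          + 4*b^4*((1-3*b)*(90*b^2+57*b+1))*(3*(10+12*b+3*b^2))
          + (4*b^4*(76/69) + 4*(2*b+1)*(2*b^2+2*b+1)*(76/69)
              - (2*b+1)*(3+6*b+6*b^2) + 12*(2*b+1)*(1/9) - 4*(2*b+1)*(2*b^2+2*b+1))
            *((3*(10+12*b+3*b^2))*(27*b*(3*b^2+6*b+1))) < 0 := by
    have h13 : (0:ℝ) ≤ 1/3 - b := by linarith
    have hstrict : (0:ℝ) < b*((1/3-b)^9 + b^9) :=
      mul_pos hb (by nlinarith [pow_nonneg h13 9, pow_pos hb 9])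
    nlinarith [hstrict,
      mul_nonneg (pow_nonneg hb.le 1) (pow_nonneg h13 9),
      mul_nonneg (pow_nonneg hb.le 2) (pow_nonneg h13 8),
      mul_nonneg (pow_nonneg hb.le 3) (pow_nonneg h13 7),
      mul_nonneg (pow_nonneg hb.le 4) (pow_nonneg h13 6),
      mul_nonneg (pow_nonneg hb.le 5) (pow_nonneg h13 5),
      mul_nonneg (pow_nonneg hb.le 6) (pow_nonneg h13 4),
      mul_nonneg (pow_nonneg hb.le 7) (pow_nonneg h13 3),
      mul_nonneg (pow_nonneg hb.le 8) (pow_nonneg h13 2),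
      mul_nonneg (pow_nonneg hb.le 9) (pow_nonneg h13 1),
      pow_pos hb 10]
  calc dphiE (1/3) b ≤ _ := step
    _ < 0 := by rw [key]; exact div_neg_of_neg_of_pos hnum (by positivity)



lemma phi_one_le (b : ℝ) (hb : 0 < b) : phi 1 b ≤ 1/3 := by
  have hW : (2*b+1) ≠ 0 := by positivity
  have e : phi 1 b = (b^4*(b+1)/(2*b+1)^2) * (Real.log (b+1) - Real.log b)
      - (b+1)*(2*b^2-2*b-1)/(4*(2*b+1)) := by
    unfold phi
    field_simp
    ring
  have l := log_sub_log_b b hb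
  have step : phi 1 b ≤ (b^4*(b+1)/(2*b+1)^2) * ((30*b^2+21*b+1)/(3*b*(10*b^2+12*b+3)))
      - (b+1)*(2*b^2-2*b-1)/(4*(2*b+1)) := by
    rw [e]
    have := mul_le_mul_of_nonneg_left l (by positivity : (0:ℝ) ≤ b^4*(b+1)/(2*b+1)^2)
    linarith
  have hden : (0:ℝ) < 3*b*(10*b^2+12*b+3) := by nlinarith [sq_nonneg b]
  have key : 1/3 - ((b^4*(b+1)/(2*b+1)^2) * ((30*b^2+21*b+1)/(3*b*(10*b^2+12*b+3)))
        - (b+1)*(2*b^2-2*b-1)/(4*(2*b+1)))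
      = (3*b+21*b^2+46*b^3+32*b^4)/(((2*b+1)^2*(3*b*(10*b^2+12*b+3)))*(4*(2*b+1))) := by
    field_simp
    ring
  have hpos : (0:ℝ) ≤ (3*b+21*b^2+46*b^3+32*b^4)/(((2*b+1)^2*(3*b*(10*b^2+12*b+3)))*(4*(2*b+1))) := by
    apply div_nonneg (by nlinarith [pow_pos hb 2, pow_pos hb 3, pow_pos hb 4])
    positivity
  linarith [key ▸ hpos]

lemma phi_zero_le (b : ℝ) (hb : 0 < b) : phi 0 b ≤ 1/3 := by
  have hW : (2*b+1) ≠ 0 := by positivity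
  have e : phi 0 b = (b*(b+1)^4/(2*b+1)^2) * (Real.log (b+1) - Real.log b)
      - b*(2*b^2+6*b+3)/(4*(2*b+1)) := by
    unfold phi
    field_simp
    ring
  have l := log_sub_log_b b hb
  have step : phi 0 b ≤ (b*(b+1)^4/(2*b+1)^2) * ((30*b^2+21*b+1)/(3*b*(10*b^2+12*b+3)))
      - b*(2*b^2+6*b+3)/(4*(2*b+1)) := by
    rw [e]
    have := mul_le_mul_of_nonneg_left l (by positivity : (0:ℝ) ≤ b*(b+1)^4/(2*b+1)^2)
    linarith
  have hden : (0:ℝ) < 3*b*(10*b^2+12*b+3) := by nlinarith [sq_nonneg b]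
  have key : 1/3 - ((b*(b+1)^4/(2*b+1)^2) * ((30*b^2+21*b+1)/(3*b*(10*b^2+12*b+3)))
        - b*(2*b^2+6*b+3)/(4*(2*b+1)))
      = (8*b+39*b^2+62*b^3+32*b^4)/(((2*b+1)^2*(3*b*(10*b^2+12*b+3)))*(4*(2*b+1))) := by
    field_simp
    ring
  have hpos : (0:ℝ) ≤ (8*b+39*b^2+62*b^3+32*b^4)/(((2*b+1)^2*(3*b*(10*b^2+12*b+3)))*(4*(2*b+1))) := by
    apply div_nonneg (by nlinarith [pow_pos hb 2, pow_pos hb 3, pow_pos hb 4])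
    positivity
  linarith [key ▸ hpos]

-- g-localization lemmas
lemma G1 (b c : ℝ) (hb : 0 < b) (hc : b + 1/2 ≤ c) :
    (2*b^2+2*b+1)*c - 2*c^3 ≤ (2*b+1)/3 := by
  nlinarith [mul_nonneg (by linarith : (0:ℝ) ≤ c - (b+1/2))
      (by nlinarith : (0:ℝ) ≤ 2*c^2 + (2*b+1)*c - 1/2)]

lemma G2 (b c : ℝ) (hb : 0 < b) (hb3 : b ≤ 1/3) (hc0 : 0 < c) (hc : c ≤ 1/3) :
    (2*b^2+2*b+1)*c - 2*c^3 ≤ (2*b+1)/3 := by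
  nlinarith [mul_nonneg (by linarith : (0:ℝ) ≤ 1/3 - c)
      (by nlinarith : (0:ℝ) ≤ 2*b^2+2*b+1-2*c^2-2*c/3-2/9),
    mul_nonneg (by linarith : (0:ℝ) ≤ 1/3 - b) (by linarith : (0:ℝ) ≤ 1/3 + b)]




lemma interp (b α β c : ℝ) (hb : 0 < b) (hα : 0 < α) (hαβ : α < β)
    (h1 : α ≤ c) (h2 : c ≤ β) (hA : dphiE α b < 0) (hB : dphiE β b < 0) :
    dphiE c b < 0 := by
  have hβ : (0:ℝ) < β := lt_trans hα hαβ
  have hc0 : (0:ℝ) < c := lt_of_lt_of_le hα h1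
  have hba : (0:ℝ) < β - α := by linarith
  -- log chord inequality
  have hlog : (β-c)*Real.log α + (c-α)*Real.log β ≤ (β-α)*Real.log c := by
    have ha : (0:ℝ) ≤ (β-c)/(β-α) := div_nonneg (by linarith) hba.le
    have hb' : (0:ℝ) ≤ (c-α)/(β-α) := div_nonneg (by linarith) hba.le
    have hab : (β-c)/(β-α) + (c-α)/(β-α) = 1 := by field_simp; ring
    have hcomb := (StrictConcaveOn.concaveOn strictConcaveOn_log_Ioi).2 (Set.mem_Ioi.2 hα)
      (Set.mem_Ioi.2 hβ) ha hb' hab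
    rw [smul_eq_mul, smul_eq_mul, smul_eq_mul, smul_eq_mul] at hcomb
    have hceq : (β-c)/(β-α)*α + (c-α)/(β-α)*β = c := by field_simp; ring
    rw [hceq] at hcomb
    calc (β-c)*Real.log α + (c-α)*Real.log β
        = (β-α)*((β-c)/(β-α)*Real.log α + (c-α)/(β-α)*Real.log β) := by field_simp
      _ ≤ (β-α)*Real.log c := by
          exact mul_le_mul_of_nonneg_left hcomb hba.le
  have hsq : (β-α)*c^2 ≤ (β-c)*α^2 + (c-α)*β^2 := by
    nlinarith [mul_nonneg (sub_nonneg.2 h1) (sub_nonneg.2 h2)]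
  have key : (β-α) * dphiE c b ≤ (β-c) * dphiE α b + (c-α) * dphiE β b := by
    unfold dphiE
    nlinarith [mul_le_mul_of_nonneg_left hsq (by positivity : (0:ℝ) ≤ 12*(2*b+1)),
      mul_le_mul_of_nonneg_left hlog (by positivity : (0:ℝ) ≤ 4*(2*b+1)*(2*b^2+2*b+1))]
  have hneg : (β-c) * dphiE α b + (c-α) * dphiE β b < 0 := by
    rcases lt_or_ge c β with h | h
    · have := mul_pos (by linarith : (0:ℝ) < β - c) (neg_pos.2 hA)
      have h2' := mul_nonneg (by linarith : (0:ℝ) ≤ c - α) (neg_nonneg.2 hB.le)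
      nlinarith
    · have hcβ : c = β := le_antisymm h2 h
      have := mul_pos (by rw [hcβ]; linarith : (0:ℝ) < c - α) (neg_pos.2 hB)
      have h2' := mul_nonneg (by linarith : (0:ℝ) ≤ β - c) (neg_nonneg.2 hA.le)
      nlinarith
  by_contra hcon
  push_neg at hcon
  nlinarith [mul_nonneg hba.le hcon]

lemma phi_hasDerivAt (b x : ℝ) (hb : 0 < b) (hbx : 0 < b + x) :
    HasDerivAt (fun y => phi y b) (dphiE (b+x) b / (4*(2*b+1)^2)) x := by
  have hW : (0:ℝ) < 2*b+1 := by linarith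
  have h1 : HasDerivAt (fun y : ℝ => b + y) 1 x := by
    simpa using (hasDerivAt_id x).const_add b
  have h2 : HasDerivAt (fun y : ℝ => (b+y)^2) (2*(b+x)) x := by
    have := h1.pow 2
    exact this.congr_deriv (by simp)
  have hA : HasDerivAt (fun y : ℝ => (b+y)/(4*(2*b+1)^2)) (1/(4*(2*b+1)^2)) x := by
    have := h1.div_const (4*(2*b+1)^2)
    convert this using 1
  have hq : HasDerivAt (fun y : ℝ => 3+6*b+6*b^2-4*(b+y)^2) (-(4*(2*(b+x)))) x := by
    have := (h2.const_mul (4:ℝ)).const_sub (3+6*b+6*b^2)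
    convert this using 1
  have hB : HasDerivAt (fun y : ℝ =>
      4*(b+1)^4*Real.log (b+1) - 4*b^4*Real.log b - (2*b+1)*(3+6*b+6*b^2-4*(b+y)^2))
      ((2*b+1)*(8*(b+x))) x := by
    have := (hq.const_mul (2*b+1)).const_sub (4*(b+1)^4*Real.log (b+1) - 4*b^4*Real.log b)
    exact this.congr_deriv (by ring)
  have hprod := hA.mul hB
  have hlog : HasDerivAt (fun y : ℝ => Real.log (b+y)) (1/(b+x)) x := by
    have := (Real.hasDerivAt_log (ne_of_gt hbx)).comp x h1
    exact this.congr_deriv (by simp)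
  have hmul : HasDerivAt (fun y : ℝ => (b+y)*Real.log (b+y))
      (1*Real.log (b+x) + (b+x)*(1/(b+x))) x := h1.mul hlog
  have hc : HasDerivAt (fun y : ℝ =>
      ((2*b^2+2*b+1)/(2*b+1))*((b+y)*Real.log (b+y)))
      (((2*b^2+2*b+1)/(2*b+1))*(1*Real.log (b+x) + (b+x)*(1/(b+x)))) x :=
    hmul.const_mul _
  have htot := hprod.sub hc
  have heq : (fun y => phi y b) = (fun y : ℝ =>
      (b+y)/(4*(2*b+1)^2) *
        (4*(b+1)^4*Real.log (b+1) - 4*b^4*Real.log b - (2*b+1)*(3+6*b+6*b^2-4*(b+y)^2))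
      - ((2*b^2+2*b+1)/(2*b+1))*((b+y)*Real.log (b+y))) := by
    funext y
    unfold phi
    ring
  rw [heq]
  refine htot.congr_deriv ?_
  unfold dphiE
  field_simp
  ring




/-- For all `b > 0` and `x ∈ [0,1]` one has `φ(x,b) ≤ 1/3`. -/
theorem phi_le_one_third (b x : ℝ) (hb : 0 < b) (hx : x ∈ Set.Icc (0 : ℝ) 1) :
    phi x b ≤ 1 / 3 := by
  have hW : (0:ℝ) < 2*b+1 := by linarith
  have hcont : ContinuousOn (fun y => phi y b) (Set.Icc 0 1) := fun y hy =>
    (phi_hasDerivAt b y hb (by have := hy.1; linarith)).continuousAt.continuousWithinAt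
  obtain ⟨x₀, hx₀, hmax⟩ := isCompact_Icc.exists_isMaxOn
    (Set.nonempty_Icc.2 (by norm_num)) hcont
  have hle : phi x b ≤ phi x₀ b := hmax hx
  suffices h : phi x₀ b ≤ 1/3 by linarith
  rcases eq_or_lt_of_le hx₀.1 with h0 | h0
  · rw [← h0]; exact phi_zero_le b hb
  rcases eq_or_lt_of_le hx₀.2 with h1 | h1
  · rw [h1]; exact phi_one_le b hb
  -- interior maximum
  have hbx : (0:ℝ) < b + x₀ := by linarith
  have hloc : IsLocalMax (fun y => phi y b) x₀ :=
    hmax.isLocalMax (Icc_mem_nhds h0 h1)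
  have hder := phi_hasDerivAt b x₀ hb hbx
  have hzero : dphiE (b+x₀) b / (4*(2*b+1)^2) = 0 := hloc.hasDerivAt_eq_zero hder
  have h0' : dphiE (b+x₀) b = 0 := by
    exact (div_eq_zero_iff.1 hzero).resolve_right (by positivity)
  -- from the critical point equation, extract the value of log (b+x₀)
  have hlogc : 4*(2*b+1)*(2*b^2+2*b+1)*Real.log (b+x₀)
      = 4*(b+1)^4*Real.log (b+1) - 4*b^4*Real.log b - (2*b+1)*(3+6*b+6*b^2)
        + 12*(2*b+1)*(b+x₀)^2 - 4*(2*b+1)*(2*b^2+2*b+1) := by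
    unfold dphiE at h0'
    linarith
  have hid : (2*b+1) * phi x₀ b = (2*b^2+2*b+1)*(b+x₀) - 2*(b+x₀)^3 := by
    unfold phi
    field_simp
    linear_combination (-1) * hlogc
  set c := b + x₀ with hc
  have hgoal : (2*b^2+2*b+1)*c - 2*c^3 ≤ (2*b+1)/3 := by
    by_contra hgt
    push_neg at hgt
    have hcu : c < b + 1/2 := by
      by_contra hge
      push_neg at hge
      exact absurd (G1 b c hb hge) (not_le.2 hgt)
    rcases le_or_gt b (1/3) with hb3 | hb3
    · have hcl : 1/3 ≤ c := by
        by_contra hlt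
        push_neg at hlt
        exact absurd (G2 b c hb hb3 (by linarith) hlt.le) (not_le.2 hgt)
      have := interp b (1/3) (b+1/2) c hb (by norm_num) (by linarith) hcl hcu.le
        (N3 b hb hb3) (N2 b hb)
      exact absurd h0' (ne_of_lt this)
    · have := interp b b (b+1/2) c hb hb (by linarith) (by linarith) hcu.le
        (N1 b hb3.le) (N2 b hb)
      exact absurd h0' (ne_of_lt this)
  -- conclude
  have : (2*b+1) * phi x₀ b ≤ (2*b+1) * (1/3) := by
    rw [hid]
    linarith
  exact le_of_mul_le_mul_left this hW
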